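/- Let k, m₁, m₂ be positive integers with gcd(k·m₁, m₂) = 1 and m₁, m₂ squarefree, and suppose three distinct points on the circle of radius r' = k√m₁/(2√m₂) centered at the origin have pairwise integer distances e, e', e''. Then m₁ divides each of e, e', e''. -/
import Mathlib

lemma keyNat (k m₁ m₂ n e A B : ℕ) (hk : k ≠ 0) (hm₁ : Squarefree m₁)
    (hcop : Nat.Coprime m₁ m₂) (hB : B ≠ 0)
    (hsum : k ^ 2 * m₁ = n + e ^ 2 * m₂) (heq : n * B ^ 2 = k ^ 2 * m₁ * A ^ 2) :
    m₁ ∣ e := by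
  have hm0 : m₁ ≠ 0 := hm₁.ne_zero
  have hdn : m₁ ∣ n := by
    rcases eq_or_ne A 0 with hA | hA
    · have : n = 0 := by
        rcases Nat.mul_eq_zero.1 (by simpa [hA] using heq) with h | h
        · exact h
        · exact absurd (by simpa using h) hB
      simp [this]
    rcases eq_or_ne n 0 with h0 | h0
    · simp [h0]
    rw [← Nat.factorization_le_iff_dvd hm0 h0, Finsupp.le_def]
    intro p
    by_cases hp : p.Prime
    · have h1 : m₁.factorization p ≤ 1 := hm₁.natFactorization_le_one p
      have hfe := congrArg (fun s => s p) (congrArg Nat.factorization heq)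
      simp only [Nat.factorization_mul h0 (by positivity : B ^ 2 ≠ 0),
        Nat.factorization_mul (by positivity : k ^ 2 * m₁ ≠ 0) (by positivity : A ^ 2 ≠ 0),
        Nat.factorization_mul (by positivity : k ^ 2 ≠ 0) hm0,
        Nat.factorization_pow, Finsupp.add_apply, Finsupp.smul_apply, smul_eq_mul] at hfe
      omega
    · simp [Nat.factorization_eq_zero_of_not_prime _ hp]
  have hd2 : m₁ ∣ e ^ 2 * m₂ := by
    have h : m₁ ∣ n + e ^ 2 * m₂ := hsum ▸ dvd_mul_left m₁ (k ^ 2)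
    exact (Nat.dvd_add_right hdn).mp h
  exact (hm₁.dvd_pow_iff_dvd two_ne_zero).1 (hcop.dvd_of_dvd_mul_right hd2)

lemma keyInt (k m₁ m₂ : ℕ) (hk : 0 < k) (hm₁ : Squarefree m₁)
    (hcop : Nat.Coprime m₁ m₂) (e f g : ℤ) (he : 0 < e) (hf : 0 < f) (hg : 0 < g)
    (heq : (k : ℤ) ^ 2 * m₁ *
        (2 * e ^ 2 * f ^ 2 + 2 * f ^ 2 * g ^ 2 + 2 * e ^ 2 * g ^ 2 - e ^ 4 - f ^ 4 - g ^ 4)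
      = 4 * m₂ * (e * f * g) ^ 2) :
    (m₁ : ℤ) ∣ e := by
  set a : ℤ := f ^ 2 + g ^ 2 - e ^ 2 with ha
  set b : ℤ := 2 * f * g with hbdef
  have hb : 0 < b := by positivity
  have hnb : ((k : ℤ) ^ 2 * m₁ - e ^ 2 * m₂) * b ^ 2 = (k : ℤ) ^ 2 * m₁ * a ^ 2 := by
    rw [ha, hbdef]; linear_combination heq
  have hn0 : 0 ≤ (k : ℤ) ^ 2 * m₁ - e ^ 2 * m₂ := by
    by_contra h
    push_neg at h
    have h1 : ((k : ℤ) ^ 2 * m₁ - e ^ 2 * m₂) * b ^ 2 < 0 :=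
      mul_neg_of_neg_of_pos h (by positivity)
    have h2 : (0 : ℤ) ≤ (k : ℤ) ^ 2 * m₁ * a ^ 2 := by positivity
    linarith [hnb]
  have hE : ((e.toNat : ℤ)) = e := Int.toNat_of_nonneg he.le
  have hsum : k ^ 2 * m₁ = ((k : ℤ) ^ 2 * m₁ - e ^ 2 * m₂).toNat + e.toNat ^ 2 * m₂ := by
    have := Int.toNat_of_nonneg hn0
    apply Nat.cast_injective (R := ℤ)
    push_cast [this, hE]
    ring
  have heqN : ((k : ℤ) ^ 2 * m₁ - e ^ 2 * m₂).toNat * b.toNat ^ 2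
      = k ^ 2 * m₁ * a.natAbs ^ 2 := by
    apply Nat.cast_injective (R := ℤ)
    push_cast [Int.toNat_of_nonneg hn0, Int.toNat_of_nonneg hb.le, sq_abs]
    linear_combination hnb
  have hd := keyNat k m₁ m₂ _ e.toNat a.natAbs b.toNat hk.ne' hm₁ hcop
    (by omega : b.toNat ≠ 0) hsum heqN
  exact hE ▸ Int.natCast_dvd_natCast.mpr hd

lemma aux_norm (P : EuclideanSpace ℝ (Fin 2)) : ‖P‖ ^ 2 = P 0 ^ 2 + P 1 ^ 2 := by
  rw [EuclideanSpace.norm_eq, Real.sq_sqrt (by positivity)]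
  simp [Fin.sum_univ_two, Real.norm_eq_abs, sq_abs]

lemma aux_dist (P Q : EuclideanSpace ℝ (Fin 2)) :
    dist P Q ^ 2 = (P 0 - Q 0) ^ 2 + (P 1 - Q 1) ^ 2 := by
  rw [EuclideanSpace.dist_eq, Real.sq_sqrt (by positivity)]
  simp [Fin.sum_univ_two, Real.dist_eq, sq_abs]

theorem stmt_13 (k m₁ m₂ : ℕ) (hk : 0 < k) (hm₁ : Squarefree m₁) (hm₂ : Squarefree m₂)
    (hcop : Nat.Coprime (k * m₁) m₂)
    (P₁ P₂ P₃ : EuclideanSpace ℝ (Fin 2))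
    (hr1 : ‖P₁‖ = (k : ℝ) * Real.sqrt m₁ / (2 * Real.sqrt m₂))
    (hr2 : ‖P₂‖ = (k : ℝ) * Real.sqrt m₁ / (2 * Real.sqrt m₂))
    (hr3 : ‖P₃‖ = (k : ℝ) * Real.sqrt m₁ / (2 * Real.sqrt m₂))
    (h12 : P₁ ≠ P₂) (h13 : P₁ ≠ P₃) (h23 : P₂ ≠ P₃)
    (e e' e'' : ℤ)
    (he : dist P₁ P₂ = (e : ℝ)) (he' : dist P₁ P₃ = (e' : ℝ)) (he'' : dist P₂ P₃ = (e'' : ℝ)) :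
    (m₁ : ℤ) ∣ e ∧ (m₁ : ℤ) ∣ e' ∧ (m₁ : ℤ) ∣ e'' := by
  have hcop' : Nat.Coprime m₁ m₂ := Nat.Coprime.coprime_dvd_left (dvd_mul_left m₁ k) hcop
  have hm₂pos : (0 : ℝ) < m₂ := by exact_mod_cast Nat.pos_of_ne_zero hm₂.ne_zero
  have hm₂0 : (m₂ : ℝ) ≠ 0 := ne_of_gt hm₂pos
  have hs1 : Real.sqrt m₁ ^ 2 = m₁ := Real.sq_sqrt (by positivity)
  have hs2 : Real.sqrt m₂ ^ 2 = m₂ := Real.sq_sqrt (by positivity)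
  have hr4 : 4 * (m₂ : ℝ) * ((k : ℝ) * Real.sqrt m₁ / (2 * Real.sqrt m₂)) ^ 2
      = (k : ℝ) ^ 2 * m₁ := by
    have h2 : ((k : ℝ) * Real.sqrt m₁) ^ 2 = k ^ 2 * m₁ := by rw [mul_pow, hs1]
    have h3 : (2 * Real.sqrt m₂) ^ 2 = 4 * m₂ := by rw [mul_pow, hs2]; norm_num
    rw [div_pow, h2, h3]
    field_simp
  -- positive side lengths
  have hep : (0 : ℤ) < e := by
    have h := dist_pos.mpr h12; rw [he] at h; exact_mod_cast h
  have he'p : (0 : ℤ) < e' := by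
    have h := dist_pos.mpr h13; rw [he'] at h; exact_mod_cast h
  have he''p : (0 : ℤ) < e'' := by
    have h := dist_pos.mpr h23; rw [he''] at h; exact_mod_cast h
  -- coordinates on the circle
  have hq1 : P₁ 0 ^ 2 + P₁ 1 ^ 2 = ((k : ℝ) * Real.sqrt m₁ / (2 * Real.sqrt m₂)) ^ 2 := by
    rw [← aux_norm, hr1]
  have hq2 : P₂ 0 ^ 2 + P₂ 1 ^ 2 = ((k : ℝ) * Real.sqrt m₁ / (2 * Real.sqrt m₂)) ^ 2 := by
    rw [← aux_norm, hr2]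
  have hq3 : P₃ 0 ^ 2 + P₃ 1 ^ 2 = ((k : ℝ) * Real.sqrt m₁ / (2 * Real.sqrt m₂)) ^ 2 := by
    rw [← aux_norm, hr3]
  have hu : (P₁ 0 - P₂ 0) ^ 2 + (P₁ 1 - P₂ 1) ^ 2 = (e : ℝ) ^ 2 := by
    rw [← aux_dist, he]
  have hv : (P₁ 0 - P₃ 0) ^ 2 + (P₁ 1 - P₃ 1) ^ 2 = (e' : ℝ) ^ 2 := by
    rw [← aux_dist, he']
  have hw : (P₂ 0 - P₃ 0) ^ 2 + (P₂ 1 - P₃ 1) ^ 2 = (e'' : ℝ) ^ 2 := by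
    rw [← aux_dist, he'']
  -- inner products
  have hc12 : P₁ 0 * P₂ 0 + P₁ 1 * P₂ 1
      = ((k : ℝ) * Real.sqrt m₁ / (2 * Real.sqrt m₂)) ^ 2 - (e : ℝ) ^ 2 / 2 := by
    linear_combination (hq1 + hq2 - hu) / 2
  have hc13 : P₁ 0 * P₃ 0 + P₁ 1 * P₃ 1
      = ((k : ℝ) * Real.sqrt m₁ / (2 * Real.sqrt m₂)) ^ 2 - (e' : ℝ) ^ 2 / 2 := by
    linear_combination (hq1 + hq3 - hv) / 2
  have hc23 : P₂ 0 * P₃ 0 + P₂ 1 * P₃ 1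
      = ((k : ℝ) * Real.sqrt m₁ / (2 * Real.sqrt m₂)) ^ 2 - (e'' : ℝ) ^ 2 / 2 := by
    linear_combination (hq2 + hq3 - hw) / 2
  -- the Gram determinant of three vectors in the plane vanishes identically
  have hGram : (P₁ 0 ^ 2 + P₁ 1 ^ 2) *
        ((P₂ 0 ^ 2 + P₂ 1 ^ 2) * (P₃ 0 ^ 2 + P₃ 1 ^ 2) - (P₂ 0 * P₃ 0 + P₂ 1 * P₃ 1) ^ 2)
      - (P₁ 0 * P₂ 0 + P₁ 1 * P₂ 1) *
        ((P₁ 0 * P₂ 0 + P₁ 1 * P₂ 1) * (P₃ 0 ^ 2 + P₃ 1 ^ 2)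
          - (P₂ 0 * P₃ 0 + P₂ 1 * P₃ 1) * (P₁ 0 * P₃ 0 + P₁ 1 * P₃ 1))
      + (P₁ 0 * P₃ 0 + P₁ 1 * P₃ 1) *
        ((P₁ 0 * P₂ 0 + P₁ 1 * P₂ 1) * (P₂ 0 * P₃ 0 + P₂ 1 * P₃ 1)
          - (P₂ 0 ^ 2 + P₂ 1 ^ 2) * (P₁ 0 * P₃ 0 + P₁ 1 * P₃ 1)) = 0 := by
    ring
  rw [hq1, hq2, hq3, hc12, hc13, hc23] at hGram
  -- the integer relation coming from the circumradius
  have hreal : (k : ℝ) ^ 2 * m₁ *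
      (2 * (e : ℝ) ^ 2 * (e' : ℝ) ^ 2 + 2 * (e' : ℝ) ^ 2 * (e'' : ℝ) ^ 2
        + 2 * (e : ℝ) ^ 2 * (e'' : ℝ) ^ 2 - (e : ℝ) ^ 4 - (e' : ℝ) ^ 4 - (e'' : ℝ) ^ 4)
      = 4 * (m₂ : ℝ) * ((e : ℝ) * (e' : ℝ) * (e'' : ℝ)) ^ 2 := by
    linear_combination (16 * (m₂ : ℝ)) * hGram -
      (2 * (e : ℝ) ^ 2 * (e' : ℝ) ^ 2 + 2 * (e' : ℝ) ^ 2 * (e'' : ℝ) ^ 2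
        + 2 * (e : ℝ) ^ 2 * (e'' : ℝ) ^ 2 - (e : ℝ) ^ 4 - (e' : ℝ) ^ 4 - (e'' : ℝ) ^ 4) * hr4
  have hint : (k : ℤ) ^ 2 * m₁ *
      (2 * e ^ 2 * e' ^ 2 + 2 * e' ^ 2 * e'' ^ 2 + 2 * e ^ 2 * e'' ^ 2
        - e ^ 4 - e' ^ 4 - e'' ^ 4) = 4 * m₂ * (e * e' * e'') ^ 2 := by
    exact_mod_cast hreal
  exact ⟨keyInt k m₁ m₂ hk hm₁ hcop' e e' e'' hep he'p he''p (by linear_combination hint),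
    keyInt k m₁ m₂ hk hm₁ hcop' e' e e'' he'p hep he''p (by linear_combination hint),
    keyInt k m₁ m₂ hk hm₁ hcop' e'' e e' he''p hep he'p (by linear_combination hint)⟩
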